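/- Let A be a symmetric positive semidefinite n×n real matrix (n ≥ 1). Then the supremum of ⟨h, Ah⟩ over all h ∈ ℝⁿ with ‖h‖₁ ≤ 1 equals max_{i,j} |A_{ij}|. -/

import Mathlib

lemma quad2 {n : ℕ} (A : Matrix (Fin n) (Fin n) ℝ) (hA : A.PosSemidef)
    (i j : Fin n) (t s : ℝ) :
    0 ≤ t^2 * A i i + t*s * A i j + s*t * A j i + s^2 * A j j := by
  have h := hA.dotProduct_mulVec_nonneg (fun k => (if k = i then t else 0) + (if k = j then s else 0))
  simp only [dotProduct, Matrix.mulVec, Pi.star_apply, star_trivial] at h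
  rw [Finset.sum_congr rfl (fun k _ => by
    rw [show (∑ l, A k l * ((if l = i then t else 0) + (if l = j then s else 0)))
      = (∑ l, (if l = i then A k l * t else 0)) + (∑ l, (if l = j then A k l * s else 0)) by
        rw [← Finset.sum_add_distrib]; exact Finset.sum_congr rfl fun l _ => by
          split_ifs <;> simp_all <;> ring])] at h
  simp only [Finset.sum_ite_eq', Finset.mem_univ, if_true] at h
  rw [Finset.sum_congr rfl (fun k _ => by
    rw [show ((if k = i then t else 0) + (if k = j then s else 0)) * (A k i * t + A k j * s)
      = (if k = i then t * (A k i * t + A k j * s) else 0)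
        + (if k = j then s * (A k i * t + A k j * s) else 0) by
          split_ifs <;> ring])] at h
  rw [Finset.sum_add_distrib] at h
  simp only [Finset.sum_ite_eq', Finset.mem_univ, if_true] at h
  nlinarith [h]


/-- For a symmetric PSD matrix `A` (`n ≥ 1`), the supremum of `⟨h, Ah⟩` over the
`ℓ₁`-unit ball equals (and is attained at) `max_{i,j} |A_{ij}|`. -/
theorem stmt8 {n : ℕ} (hn : 1 ≤ n) (A : Matrix (Fin n) (Fin n) ℝ) (hA : A.PosSemidef)
    (M : ℝ) (hM : IsGreatest {v | ∃ i j, v = |A i j|} M) :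
    IsGreatest
      {v | ∃ h : Fin n → ℝ, (∑ i, |h i|) ≤ 1 ∧ v = ∑ i, h i * A.mulVec h i} M := by
  obtain ⟨⟨i, j, hij⟩, hub⟩ := hM
  have hM0 : 0 ≤ M := hij ▸ abs_nonneg _
  have hdiag : ∀ k, A k k ≤ M := fun k => (le_abs_self _).trans (hub ⟨k, k, rfl⟩)
  have hdiag0 : ∀ k, 0 ≤ A k k := fun k => by nlinarith [quad2 A hA k k 1 0]
  have hsym : A j i = A i j := by
    have := congrFun (congrFun hA.1 i) j
    simpa [Matrix.conjTranspose_apply] using this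
  have hcs : A i j ^ 2 ≤ A i i * A j j := by
    have hd : discrim (A j j) (2 * A i j) (A i i) ≤ 0 := by
      apply discrim_le_zero
      intro x
      have := quad2 A hA i j 1 x
      rw [hsym] at this
      nlinarith [this]
    rw [discrim] at hd
    nlinarith [hd]
  have hMii : M ≤ A i i := by
    have h1 : M ^ 2 = A i j ^ 2 := by rw [hij]; rw [sq_abs]
    nlinarith [hdiag i, hdiag j, hdiag0 i, hdiag0 j]
  constructor
  · refine ⟨fun l => if l = i then 1 else 0, ?_, ?_⟩
    · simp [apply_ite abs]
    · have hii : A i i = M := le_antisymm (hdiag i) hMii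
      simp [Matrix.mulVec, dotProduct, ite_mul, mul_ite, Finset.sum_ite_eq',
        hii]
  · rintro v ⟨h, hh1, rfl⟩
    have habs : 0 ≤ ∑ l, |h l| := Finset.sum_nonneg fun l _ => abs_nonneg _
    calc ∑ l, h l * A.mulVec h l = ∑ l, ∑ m, h l * (A l m * h m) := by
          simp [Matrix.mulVec, dotProduct, Finset.mul_sum]
      _ ≤ ∑ l, ∑ m, |h l| * M * |h m| := by
          refine Finset.sum_le_sum fun l _ => Finset.sum_le_sum fun m _ => ?_
          have h1 : h l * (A l m * h m) ≤ |h l| * |A l m| * |h m| := by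
            rw [← abs_mul, ← abs_mul]; exact (le_abs_self _).trans (le_of_eq (by ring_nf))
          have h2 : |A l m| ≤ M := hub ⟨l, m, rfl⟩
          nlinarith [h1, h2, mul_nonneg (abs_nonneg (h l)) (abs_nonneg (h m))]
      _ = M * ((∑ l, |h l|) * (∑ m, |h m|)) := by
          simp only [Finset.mul_sum, Finset.sum_mul]
          exact Finset.sum_congr rfl fun l _ => Finset.sum_congr rfl fun m _ => by ring
      _ ≤ M * 1 := by
          have hs : (∑ l, |h l|) * (∑ m, |h m|) ≤ 1 := by nlinarith
          exact mul_le_mul_of_nonneg_left hs hM0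
      _ = M := mul_one M
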